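/- Let X be a real Hilbert space and let φ : X → (-∞, +∞] be a convex, lower semicontinuous function that is not identically +∞ (convexity meaning φ(t x + (1-t) y) ≤ t φ(x) + (1-t) φ(y) in the extended reals for all x, y ∈ X and t ∈ [0,1]). Define the subdifferential ∂φ(x) = { p ∈ X : φ(x) + ⟨p, w - x⟩ ≤ φ(w) for all w ∈ X }. Then the operator x ↦ ∂φ(x) is maximal monotone. -/

import Mathlib

open scoped InnerProductSpace

/-- A multivalued operator `A : X → 𝒫(X)` is monotone if
`⟪v₁ - v₂, x₁ - x₂⟫ ≥ 0` whenever `v₁ ∈ A x₁`, `v₂ ∈ A x₂`. -/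
def IsMonotoneOperator {X : Type*} [NormedAddCommGroup X] [InnerProductSpace ℝ X]
    (A : X → Set X) : Prop :=
  ∀ x₁ x₂ v₁ v₂, v₁ ∈ A x₁ → v₂ ∈ A x₂ → 0 ≤ ⟪v₁ - v₂, x₁ - x₂⟫_ℝ

/-- A monotone operator is maximal monotone if its graph is not properly contained
in the graph of any other monotone operator. -/
def IsMaximalMonotoneOperator {X : Type*} [NormedAddCommGroup X] [InnerProductSpace ℝ X]
    (A : X → Set X) : Prop :=
  IsMonotoneOperator A ∧
    ∀ B : X → Set X, IsMonotoneOperator B → (∀ x, A x ⊆ B x) → B = A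

/-- The subdifferential of an extended-real-valued function `φ` at `x`. -/
def Subdifferential {X : Type*} [NormedAddCommGroup X] [InnerProductSpace ℝ X]
    (φ : X → EReal) (x : X) : Set X :=
  {p : X | ∀ w : X, φ x + (⟪p, w - x⟫_ℝ : ℝ) ≤ φ w}

lemma EReal.exists_real_eq {a : EReal} (hb : a ≠ ⊥) (ht : a ≠ ⊤) : ∃ r : ℝ, a = (r : EReal) :=
  ⟨a.toReal, (EReal.coe_toReal ht hb).symm⟩

lemma exists_affine_minorant {X : Type*} [NormedAddCommGroup X] [InnerProductSpace ℝ X]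
    (φ : X → EReal)
    (hproper_bot : ∀ x, φ x ≠ ⊥)
    (hproper_top : ∃ x, φ x ≠ ⊤)
    (hconvex : ∀ x y : X, ∀ t : ℝ, 0 ≤ t → t ≤ 1 →
      φ (t • x + (1 - t) • y) ≤ (t : EReal) * φ x + ((1 - t : ℝ) : EReal) * φ y)
    (hlsc : LowerSemicontinuous φ) :
    ∃ (g : X →L[ℝ] ℝ) (c : ℝ), ∀ w : X, ((g w + c : ℝ) : EReal) ≤ φ w := by
  obtain ⟨x₀, hx₀⟩ := hproper_top
  obtain ⟨r₀, hr₀⟩ := EReal.exists_real_eq (hproper_bot x₀) hx₀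
  set S : Set (X × ℝ) := {p : X × ℝ | φ p.1 ≤ (p.2 : EReal)} with hS
  have hSclosed : IsClosed S := by
    have h1 : IsClosed {p : X × EReal | φ p.1 ≤ p.2} := hlsc.isClosed_epigraph
    have : S = (fun p : X × ℝ => ((p.1, (p.2 : EReal)) : X × EReal)) ⁻¹' {p : X × EReal | φ p.1 ≤ p.2} := rfl
    rw [this]
    exact h1.preimage (continuous_fst.prodMk (continuous_coe_real_ereal.comp continuous_snd))
  have hSconvex : Convex ℝ S := by
    rintro p hp q hq a b ha hb hab
    simp only [hS, Set.mem_setOf_eq] at hp hq ⊢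
    have h1 : (a • p + b • q).1 = a • p.1 + (1 - a) • q.1 := by
      simp [Prod.smul_fst]; rw [show (1:ℝ) - a = b by linarith]
    have h2 : ((a • p + b • q).2 : ℝ) = a * p.2 + b * q.2 := by simp [smul_eq_mul]
    rw [h1, h2]
    calc φ (a • p.1 + (1 - a) • q.1) ≤ (a : EReal) * φ p.1 + ((1 - a : ℝ) : EReal) * φ q.1 :=
          hconvex p.1 q.1 a ha (by linarith)
      _ ≤ (a : EReal) * (p.2 : EReal) + ((1 - a : ℝ) : EReal) * (q.2 : EReal) := by
          gcongr
          · exact EReal.coe_nonneg.2 (by linarith : (0:ℝ) ≤ 1 - a)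
      _ = ((a * p.2 + b * q.2 : ℝ) : EReal) := by
          rw [← EReal.coe_mul, ← EReal.coe_mul, ← EReal.coe_add,
            show b = 1 - a by linarith]
  have hnotmem : ((x₀, r₀ - 1) : X × ℝ) ∉ S := by
    simp only [hS, Set.mem_setOf_eq, hr₀, EReal.coe_le_coe_iff]
    linarith
  obtain ⟨f, u, hfu, hfS⟩ := geometric_hahn_banach_point_closed hSconvex hSclosed hnotmem
  -- decompose f
  set g : X →L[ℝ] ℝ := f.comp (ContinuousLinearMap.inl ℝ X ℝ) with hg
  set c : ℝ := f (0, 1) with hc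
  have hf_eq : ∀ (w : X) (t : ℝ), f (w, t) = g w + t * c := by
    intro w t
    have : ((w, t) : X × ℝ) = (w, 0) + t • ((0 : X), (1 : ℝ)) := by
      simp [Prod.ext_iff]
    rw [this, map_add, map_smul]
    simp [hg, hc, smul_eq_mul]
  have hmem₀ : ((x₀, r₀) : X × ℝ) ∈ S := by simp [hS, hr₀]
  have h1 : u < g x₀ + r₀ * c := by rw [← hf_eq]; exact hfS _ hmem₀
  have h2 : g x₀ + (r₀ - 1) * c < u := by rw [← hf_eq]; exact hfu
  have hcpos : 0 < c := by nlinarith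
  refine ⟨-(c⁻¹) • g, u / c, fun w => ?_⟩
  by_cases hw : φ w = ⊤
  · rw [hw]; exact le_top
  obtain ⟨s, hs⟩ := EReal.exists_real_eq (hproper_bot w) hw
  have hmem : ((w, s) : X × ℝ) ∈ S := by simp [hS, hs]
  have h3 : u < g w + s * c := by rw [← hf_eq]; exact hfS _ hmem
  rw [hs, EReal.coe_le_coe_iff]
  have : (-(c⁻¹) • g) w = -(c⁻¹ * g w) := by simp [smul_eq_mul]
  rw [this]
  have hc0 : c ≠ 0 := hcpos.ne'
  have key : (u - g w) / c ≤ s := by rw [div_le_iff₀ hcpos]; linarith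
  calc -(c⁻¹ * g w) + u / c = (u - g w) / c := by field_simp; ring
    _ ≤ s := key

lemma exists_prox {X : Type*} [NormedAddCommGroup X] [InnerProductSpace ℝ X] [CompleteSpace X]
    (φ : X → EReal)
    (hproper_bot : ∀ x, φ x ≠ ⊥)
    (hproper_top : ∃ x, φ x ≠ ⊤)
    (hconvex : ∀ x y : X, ∀ t : ℝ, 0 ≤ t → t ≤ 1 →
      φ (t • x + (1 - t) • y) ≤ (t : EReal) * φ x + ((1 - t : ℝ) : EReal) * φ y)
    (hlsc : LowerSemicontinuous φ) (a : X) :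
    ∃ z : X, φ z ≠ ⊤ ∧ ∀ w : X,
      φ z + ((‖z - a‖ ^ 2 / 2 : ℝ) : EReal) ≤ φ w + ((‖w - a‖ ^ 2 / 2 : ℝ) : EReal) := by
  classical
  set q : X → ℝ := fun w => ‖w - a‖ ^ 2 / 2 with hq
  have hqc : Continuous q := by
    have h : Continuous fun w : X => ‖w - a‖ := (continuous_id.sub continuous_const).norm
    exact (h.pow 2).div_const 2
  obtain ⟨g, c, hgc⟩ := exists_affine_minorant φ hproper_bot hproper_top hconvex hlsc
  set M : ℝ := c + ‖a‖ ^ 2 / 2 - (‖g‖ + ‖a‖) ^ 2 / 2 with hM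
  have hlowR : ∀ w : X, M ≤ g w + c + q w := by
    intro w
    have h1 : -(‖g‖ * ‖w‖) ≤ g w := by
      have h := g.le_opNorm w
      rw [Real.norm_eq_abs] at h
      have := neg_abs_le (g w)
      linarith
    have h2 : (‖w‖ - ‖a‖) ^ 2 ≤ ‖w - a‖ ^ 2 := by
      have h := abs_norm_sub_norm_le w a
      calc (‖w‖ - ‖a‖) ^ 2 = |‖w‖ - ‖a‖| ^ 2 := (sq_abs _).symm
        _ ≤ ‖w - a‖ ^ 2 := by
          apply pow_le_pow_left₀ (abs_nonneg _) h
    simp only [hq, hM]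
    nlinarith [sq_nonneg (‖w‖ - (‖g‖ + ‖a‖)), norm_nonneg w, norm_nonneg a, norm_nonneg g]
  have hlow : ∀ w : X, ((M : ℝ) : EReal) ≤ φ w + (q w : EReal) := by
    intro w
    calc ((M : ℝ) : EReal) ≤ ((g w + c + q w : ℝ) : EReal) := EReal.coe_le_coe_iff.2 (hlowR w)
      _ = ((g w + c : ℝ) : EReal) + (q w : EReal) := EReal.coe_add _ _
      _ ≤ φ w + (q w : EReal) := add_le_add_left (hgc w) _
  -- ψ never ⊥
  have hpsi_bot : ∀ w : X, φ w + (q w : EReal) ≠ ⊥ := by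
    intro w h
    rcases EReal.add_eq_bot_iff.1 h with h' | h'
    · exact hproper_bot w h'
    · exact EReal.coe_ne_bot _ h'
  -- a w with real value: if φ w ≠ ⊤ then ψ w = ↑(toReal + q w)
  have hreal : ∀ w : X, φ w ≠ ⊤ → φ w + (q w : EReal) = (((φ w).toReal + q w : ℝ) : EReal) := by
    intro w hw
    rw [EReal.coe_add, EReal.coe_toReal hw (hproper_bot w)]
  obtain ⟨x₀, hx₀⟩ := hproper_top
  set T : Set ℝ := {r : ℝ | ∃ w : X, φ w + (q w : EReal) = (r : EReal)} with hT
  have hT0 : ((φ x₀).toReal + q x₀) ∈ T := ⟨x₀, hreal x₀ hx₀⟩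
  have hTne : T.Nonempty := ⟨_, hT0⟩
  have hTbdd : BddBelow T := by
    refine ⟨M, fun r hr => ?_⟩
    obtain ⟨w, hw⟩ := hr
    have := hlow w
    rw [hw, EReal.coe_le_coe_iff] at this
    exact this
  set m : ℝ := sInf T with hm
  -- minimizing sequence
  have hseq : ∀ n : ℕ, ∃ w : X, ∃ r : ℝ,
      φ w + (q w : EReal) = (r : EReal) ∧ r < m + 1 / (n + 1) := by
    intro n
    have hpos : (0 : ℝ) < 1 / (n + 1) := by positivity
    obtain ⟨r, hrT, hrlt⟩ := exists_lt_of_csInf_lt hTne (lt_add_of_pos_right m hpos)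
    obtain ⟨w, hw⟩ := hrT
    exact ⟨w, r, hw, hrlt⟩
  choose w r hwr hrlt using hseq
  have hrm : ∀ n, m ≤ r n := fun n => csInf_le hTbdd ⟨w n, hwr n⟩
  -- each φ (w n) is real
  have hwtop : ∀ n, φ (w n) ≠ ⊤ := by
    intro n h
    have := hwr n
    rw [h, EReal.top_add_coe] at this
    exact EReal.coe_ne_top _ this.symm
  have hwval : ∀ n, (φ (w n)).toReal + q (w n) = r n := by
    intro n
    have := hwr n
    rw [hreal _ (hwtop n), EReal.coe_eq_coe_iff] at this
    exact this
  -- midpoint estimate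
  have hkey : ∀ i j : ℕ, ‖w i - w j‖ ^ 2 / 8 ≤ (r i + r j) / 2 - m := by
    intro i j
    set u := w i; set v := w j
    set pu : ℝ := (φ u).toReal with hpu
    set pv : ℝ := (φ v).toReal with hpv
    have hu : φ u = (pu : EReal) := (EReal.coe_toReal (hwtop i) (hproper_bot u)).symm
    have hv : φ v = (pv : EReal) := (EReal.coe_toReal (hwtop j) (hproper_bot v)).symm
    have hmid := hconvex u v (1/2) (by norm_num) (by norm_num)
    rw [hu, hv, ← EReal.coe_mul, ← EReal.coe_mul, ← EReal.coe_add] at hmid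
    set mid := (1/2 : ℝ) • u + (1 - 1/2 : ℝ) • v with hmiddef
    have hmtop : φ mid ≠ ⊤ := by
      intro h; rw [h] at hmid; exact EReal.coe_ne_top _ (top_le_iff.1 hmid)
    set pm : ℝ := (φ mid).toReal with hpm
    have hmeq : φ mid = (pm : EReal) := (EReal.coe_toReal hmtop (hproper_bot mid)).symm
    rw [hmeq, EReal.coe_le_coe_iff] at hmid
    -- mid value in T
    have hmemT : (pm + q mid) ∈ T := ⟨mid, hreal mid hmtop⟩
    have hmle : m ≤ pm + q mid := csInf_le hTbdd hmemT
    -- parallelogram computation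
    have hqmid : q mid = (q u + q v) / 2 - ‖u - v‖ ^ 2 / 8 := by
      have hpar := parallelogram_law_with_norm ℝ (u - a) (v - a)
      have h1 : mid - a = (1/2 : ℝ) • ((u - a) + (v - a)) := by
        simp only [hmiddef]
        module
      have h2 : (u - a) - (v - a) = u - v := by abel
      have h3 : ‖mid - a‖ ^ 2 = ‖(u - a) + (v - a)‖ ^ 2 / 4 := by
        rw [h1, norm_smul]
        simp [mul_pow]
        ring
      have h4 : ‖(u - a) + (v - a)‖ ^ 2 = 2 * ‖u - a‖ ^ 2 + 2 * ‖v - a‖ ^ 2 - ‖u - v‖ ^ 2 := by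
        rw [h2] at hpar
        try simp only [← pow_two] at hpar
        linarith
      simp only [hq]
      rw [h3, h4]
      ring
    have hru : pu + q u = r i := hwval i
    have hrv : pv + q v = r j := hwval j
    linarith
  -- Cauchy
  have hcauchy : CauchySeq w := by
    rw [Metric.cauchySeq_iff']
    intro ε hε
    obtain ⟨N, hN⟩ := exists_nat_gt (8 / ε ^ 2)
    refine ⟨N, fun n hn => ?_⟩
    have h1 := hkey n N
    have h2 := hrlt n
    have h3 := hrlt N
    have h4 := hrm n
    have h5 := hrm N
    have hb1 : (1 : ℝ) / (n + 1) ≤ 1 / (N + 1) := by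
      apply div_le_div_of_nonneg_left one_pos.le (by positivity)
      exact_mod_cast by omega
    have hNpos : (0 : ℝ) < N + 1 := by positivity
    have h6 : ‖w n - w N‖ ^ 2 ≤ 8 / (N + 1) := by
      have h0 : ‖w n - w N‖ ^ 2 / 8 ≤ 1 / (N + 1) := by linarith
      rw [le_div_iff₀ hNpos]
      rw [div_le_div_iff₀ (by norm_num) hNpos] at h0
      linarith
    have h7 : 8 / ((N : ℝ) + 1) < ε ^ 2 := by
      rw [div_lt_iff₀ hNpos]
      rw [div_lt_iff₀ (by positivity : (0:ℝ) < ε ^ 2)] at hN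
      nlinarith
    rw [dist_eq_norm]
    have h8 : ‖w n - w N‖ ^ 2 < ε ^ 2 := lt_of_le_of_lt h6 h7
    exact lt_of_pow_lt_pow_left₀ 2 hε.le h8
  obtain ⟨z, hz⟩ := cauchySeq_tendsto_of_complete hcauchy
  -- lsc at z gives ψ z ≤ m
  have hzle : φ z + (q z : EReal) ≤ (m : EReal) := by
    by_contra hcon
    push_neg at hcon
    obtain ⟨b, hb1, hb2⟩ := EReal.exists_between_coe_real hcon
    rw [EReal.coe_lt_coe_iff] at hb1
    have hphiz : ((b - q z : ℝ) : EReal) < φ z := by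
      by_contra h
      push_neg at h
      have : φ z + (q z : EReal) ≤ ((b - q z : ℝ) : EReal) + (q z : EReal) :=
        add_le_add_left h _
      rw [← EReal.coe_add] at this
      simp only [sub_add_cancel] at this
      exact absurd (this.trans_lt hb2) (lt_irrefl _)
    have hev1 : ∀ᶠ w' in nhds z, ((b - q z : ℝ) : EReal) < φ w' := hlsc z _ hphiz
    have hev2 : ∀ᶠ w' in nhds z, q z - (b - m) / 2 < q w' :=
      (hqc.tendsto z).eventually (eventually_gt_nhds (by linarith))
    have hev := (hz.eventually (hev1.and hev2)).and
      (Filter.eventually_gt_atTop (Nat.ceil (2 / (b - m))))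
    obtain ⟨n, ⟨hn1, hn2⟩, hn3⟩ := hev.exists
    -- get real value of φ (w n)
    have hpn : φ (w n) = (((φ (w n)).toReal : ℝ) : EReal) :=
      (EReal.coe_toReal (hwtop n) (hproper_bot (w n))).symm
    rw [hpn, EReal.coe_lt_coe_iff] at hn1
    have hrn := hwval n
    have hsmall : (1 : ℝ) / (n + 1) < (b - m) / 2 := by
      have hn3' : (2 / (b - m)) < (n : ℝ) + 1 := by
        calc (2 / (b - m)) ≤ (Nat.ceil (2 / (b - m)) : ℝ) := Nat.le_ceil _
          _ < (n : ℝ) + 1 := by exact_mod_cast Nat.lt_succ_of_lt hn3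
      rw [div_lt_div_iff₀ (by positivity) (by norm_num)]
      rw [div_lt_iff₀ (by linarith : (0:ℝ) < b - m)] at hn3'
      nlinarith [hn3']
    have := hrlt n
    linarith
  have hztop : φ z ≠ ⊤ := by
    intro h
    rw [h, EReal.top_add_coe] at hzle
    exact absurd (top_le_iff.1 hzle) (EReal.coe_ne_top m)
  refine ⟨z, hztop, fun v => ?_⟩
  by_cases hv : φ v = ⊤
  · rw [hv, EReal.top_add_coe]; exact le_top
  · have hmemT : ((φ v).toReal + q v) ∈ T := ⟨v, hreal v hv⟩
    have : m ≤ (φ v).toReal + q v := csInf_le hTbdd hmemT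
    calc φ z + ((‖z - a‖ ^ 2 / 2 : ℝ) : EReal) ≤ (m : EReal) := hzle
      _ ≤ (((φ v).toReal + q v : ℝ) : EReal) := EReal.coe_le_coe_iff.2 this
      _ = φ v + ((‖v - a‖ ^ 2 / 2 : ℝ) : EReal) := (hreal v hv).symm

lemma mem_subdiff_of_min {X : Type*} [NormedAddCommGroup X] [InnerProductSpace ℝ X]
    (φ : X → EReal)
    (hproper_bot : ∀ x, φ x ≠ ⊥)
    (hconvex : ∀ x y : X, ∀ t : ℝ, 0 ≤ t → t ≤ 1 →
      φ (t • x + (1 - t) • y) ≤ (t : EReal) * φ x + ((1 - t : ℝ) : EReal) * φ y)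
    (a z : X) (hztop : φ z ≠ ⊤)
    (hmin : ∀ w : X, φ z + ((‖z - a‖ ^ 2 / 2 : ℝ) : EReal) ≤ φ w + ((‖w - a‖ ^ 2 / 2 : ℝ) : EReal)) :
    (a - z) ∈ Subdifferential φ z := by
  intro w
  set p : ℝ := (φ z).toReal with hp
  have hz : φ z = (p : EReal) := (EReal.coe_toReal hztop (hproper_bot z)).symm
  by_cases hw : φ w = ⊤
  · rw [hw]; exact le_top
  set s : ℝ := (φ w).toReal with hs
  have hweq : φ w = (s : EReal) := (EReal.coe_toReal hw (hproper_bot w)).symm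
  set I : ℝ := ⟪a - z, w - z⟫_ℝ with hI
  -- key claim
  have claim : ∀ t : ℝ, 0 < t → t ≤ 1 → p + I ≤ s + t / 2 * ‖w - z‖ ^ 2 := by
    intro t ht ht1
    have hc := hconvex w z t ht.le ht1
    rw [hz, hweq, ← EReal.coe_mul, ← EReal.coe_mul, ← EReal.coe_add] at hc
    set y := t • w + (1 - t : ℝ) • z with hy
    have hytop : φ y ≠ ⊤ := by
      intro h; rw [h] at hc; exact EReal.coe_ne_top _ (top_le_iff.1 hc)
    set py : ℝ := (φ y).toReal with hpy
    have hyeq : φ y = (py : EReal) := (EReal.coe_toReal hytop (hproper_bot y)).symm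
    rw [hyeq, EReal.coe_le_coe_iff] at hc
    have hminy := hmin y
    rw [hz, hyeq, ← EReal.coe_add, ← EReal.coe_add, EReal.coe_le_coe_iff] at hminy
    -- norm expansion
    have hyz : y - a = (z - a) + t • (w - z) := by
      simp only [hy]; module
    have hnorm : ‖y - a‖ ^ 2 = ‖z - a‖ ^ 2 + 2 * t * ⟪z - a, w - z⟫_ℝ + t ^ 2 * ‖w - z‖ ^ 2 := by
      rw [hyz, norm_add_sq_real, real_inner_smul_right, norm_smul]
      simp [Real.norm_eq_abs, mul_pow, sq_abs]
      ring
    have hId : I = -⟪z - a, w - z⟫_ℝ := by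
      rw [hI, ← inner_neg_left, neg_sub]
    have h2 : t * (p + I) ≤ t * (s + t / 2 * ‖w - z‖ ^ 2) := by
      rw [hId]
      nlinarith [hminy, hc, hnorm]
    exact le_of_mul_le_mul_left h2 ht
  -- conclude p + I ≤ s
  have hfin : p + I ≤ s := by
    by_contra hcon
    push_neg at hcon
    set ε : ℝ := p + I - s with hε
    have hεpos : 0 < ε := by simp only [hε]; linarith
    have hN : (0 : ℝ) ≤ ‖w - z‖ ^ 2 := sq_nonneg _
    rcases hN.eq_or_lt with hN0 | hNpos
    · have := claim 1 one_pos le_rfl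
      rw [← hN0] at this
      simp at this
      linarith
    · have ht0 : 0 < min 1 (ε / ‖w - z‖ ^ 2) :=
        lt_min one_pos (div_pos hεpos hNpos)
      have := claim _ ht0 (min_le_left _ _)
      have hb : min 1 (ε / ‖w - z‖ ^ 2) * ‖w - z‖ ^ 2 ≤ ε := by
        calc min 1 (ε / ‖w - z‖ ^ 2) * ‖w - z‖ ^ 2
            ≤ (ε / ‖w - z‖ ^ 2) * ‖w - z‖ ^ 2 :=
              mul_le_mul_of_nonneg_right (min_le_right _ _) hN
          _ = ε := div_mul_cancel₀ _ hNpos.ne'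
      linarith
  rw [hz, hweq, ← EReal.coe_add, EReal.coe_le_coe_iff]
  exact hfin


lemma subdiff_ne_top {X : Type*} [NormedAddCommGroup X] [InnerProductSpace ℝ X]
    (φ : X → EReal) (hproper_top : ∃ x, φ x ≠ ⊤) {x v : X}
    (hv : v ∈ Subdifferential φ x) : φ x ≠ ⊤ := by
  intro h
  obtain ⟨x₀, hx₀⟩ := hproper_top
  have := hv x₀
  rw [h, EReal.top_add_coe] at this
  exact hx₀ (top_le_iff.1 this)

lemma subdifferential_monotone {X : Type*} [NormedAddCommGroup X] [InnerProductSpace ℝ X]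
    (φ : X → EReal)
    (hproper_bot : ∀ x, φ x ≠ ⊥)
    (hproper_top : ∃ x, φ x ≠ ⊤) :
    IsMonotoneOperator (Subdifferential φ) := by
  intro x₁ x₂ v₁ v₂ hv₁ hv₂
  have h1t := subdiff_ne_top φ hproper_top hv₁
  have h2t := subdiff_ne_top φ hproper_top hv₂
  obtain ⟨p₁, hp₁⟩ := EReal.exists_real_eq (hproper_bot x₁) h1t
  obtain ⟨p₂, hp₂⟩ := EReal.exists_real_eq (hproper_bot x₂) h2t
  have h1 := hv₁ x₂
  have h2 := hv₂ x₁
  rw [hp₁, hp₂, ← EReal.coe_add, EReal.coe_le_coe_iff] at h1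
  rw [hp₁, hp₂, ← EReal.coe_add, EReal.coe_le_coe_iff] at h2
  rw [inner_sub_left, inner_sub_right, inner_sub_right]
  rw [inner_sub_right] at h1
  rw [inner_sub_right] at h2
  linarith

/-- The subdifferential of a proper convex lower semicontinuous function on a real
Hilbert space is a maximal monotone operator. -/
theorem subdifferential_maximal_monotone
    {X : Type*} [NormedAddCommGroup X] [InnerProductSpace ℝ X] [CompleteSpace X]
    (φ : X → EReal)
    (hproper_bot : ∀ x, φ x ≠ ⊥)
    (hproper_top : ∃ x, φ x ≠ ⊤)
    (hconvex : ∀ x y : X, ∀ t : ℝ, 0 ≤ t → t ≤ 1 →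
      φ (t • x + (1 - t) • y) ≤ (t : EReal) * φ x + ((1 - t : ℝ) : EReal) * φ y)
    (hlsc : LowerSemicontinuous φ) :
    IsMaximalMonotoneOperator (Subdifferential φ) := by
  refine ⟨subdifferential_monotone φ hproper_bot hproper_top, fun B hB hsub => ?_⟩
  funext x
  apply Set.Subset.antisymm _ (hsub x)
  intro v hv
  obtain ⟨z, hztop, hzmin⟩ :=
    exists_prox φ hproper_bot hproper_top hconvex hlsc (x + v)
  have hpz : (x + v - z) ∈ Subdifferential φ z :=
    mem_subdiff_of_min φ hproper_bot hconvex (x + v) z hztop hzmin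
  have hpB : (x + v - z) ∈ B z := hsub z hpz
  have hmono := hB x z v (x + v - z) hv hpB
  have hcalc : v - (x + v - z) = -(x - z) := by abel
  rw [hcalc, inner_neg_left, real_inner_self_eq_norm_sq] at hmono
  have hxz : x = z := by
    have h0 : ‖x - z‖ ^ 2 ≤ 0 := by
      have := neg_nonneg.1 hmono
      nlinarith [this]
    have : ‖x - z‖ = 0 := by nlinarith [norm_nonneg (x - z), sq_nonneg ‖x - z‖]
    have := norm_eq_zero.1 this
    exact sub_eq_zero.1 this
  have : x + v - z = v := by rw [hxz]; abel
  rw [this] at hpz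
  rw [← hxz] at hpz
  exact hpz
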